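/- For all integers d ≥ 1 and k ≥ 2, the diameter of the graph H_{d,k} is at most (2d − 1)·k. -/

import Mathlib

open Matrix

attribute [local instance] Classical.propDecidable

/-- Vertex type of the graph `H_{d+1,k}` of the paper (the index is shifted by one:
`HVertex 0 k` is the vertex set of `H_{1,k}`, a path on `k` vertices). -/
def HVertex : ℕ → ℕ → Type
  | 0, k => Fin k
  | d + 1, k => Fin k ⊕ (Fin k × HVertex d k)

instance HVertex.fintype : (d k : ℕ) → Fintype (HVertex d k)
  | 0, k => inferInstanceAs (Fintype (Fin k))
  | d + 1, k =>
    letI := HVertex.fintype d k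
    inferInstanceAs (Fintype (Fin k ⊕ (Fin k × HVertex d k)))

/-- The designated root of `H_{d+1,k}`: an endpoint of the topmost path. -/
def HRoot (d k : ℕ) [NeZero k] : HVertex d k :=
  match d with
  | 0 => (0 : Fin k)
  | _ + 1 => Sum.inl (0 : Fin k)

/-- Adjacency of `H_{d+1,k}`: `HVertex 0 k` carries the path graph on `k` vertices;
`H_{d+2,k}` is a path on `k` vertices together with, for each path vertex `i`, an edge
from `i` to the root of the `i`-th fresh copy of `H_{d+1,k}`. -/
def HAdj (k : ℕ) [NeZero k] : (d : ℕ) → HVertex d k → HVertex d k → Prop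
  | 0 => fun u v => (SimpleGraph.pathGraph k).Adj u v
  | d + 1 => fun u v =>
      match u, v with
      | Sum.inl i, Sum.inl j => (SimpleGraph.pathGraph k).Adj i j
      | Sum.inl i, Sum.inr p => i = p.1 ∧ p.2 = HRoot d k
      | Sum.inr p, Sum.inl i => p.1 = i ∧ p.2 = HRoot d k
      | Sum.inr p, Sum.inr q => p.1 = q.1 ∧ HAdj k d p.2 q.2

theorem HAdj.symm' (k : ℕ) [NeZero k] :
    ∀ (d : ℕ) (u v : HVertex d k), HAdj k d u v → HAdj k d v u := by
  intro d
  induction d with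
  | zero => exact fun u v h => (SimpleGraph.pathGraph k).adj_symm h
  | succ d ih =>
    intro u v h
    match u, v with
    | Sum.inl i, Sum.inl j => exact (SimpleGraph.pathGraph k).adj_symm h
    | Sum.inl i, Sum.inr p => exact ⟨h.1.symm, h.2⟩
    | Sum.inr p, Sum.inl i => exact ⟨h.1.symm, h.2⟩
    | Sum.inr p, Sum.inr q => exact ⟨h.1.symm, ih p.2 q.2 h.2⟩

theorem HAdj.irrefl' (k : ℕ) [NeZero k] :
    ∀ (d : ℕ) (u : HVertex d k), ¬HAdj k d u u := by
  intro d
  induction d with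
  | zero => exact fun u h => (SimpleGraph.pathGraph k).irrefl h
  | succ d ih =>
    intro u h
    match u with
    | Sum.inl i => exact (SimpleGraph.pathGraph k).irrefl h
    | Sum.inr p => exact ih p.2 h.2

/-- The graph `H_{d+1,k}` of the paper (index shifted by one: `HGraph k 0 = H_{1,k}`). -/
def HGraph (k : ℕ) [NeZero k] (d : ℕ) : SimpleGraph (HVertex d k) where
  Adj := HAdj k d
  symm := ⟨fun u v h => HAdj.symm' k d u v h⟩
  loopless := ⟨fun u h => HAdj.irrefl' k d u h⟩


section HProofAux

variable {k : ℕ} [NeZero k]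

/-- Projection of a vertex of `H_{d+1,k}` onto the topmost path. -/
def HTop : (d : ℕ) → HVertex d k → Fin k
  | 0, u => u
  | _ + 1, Sum.inl i => i
  | _ + 1, Sum.inr p => p.1

/-- Embedding of the topmost path into `H_{d+1,k}`. -/
def HInTop : (d : ℕ) → Fin k → HVertex d k
  | 0, i => i
  | _ + 1, i => Sum.inl i

/-- The topmost path embeds as a graph homomorphism. -/
def HTopHom (d : ℕ) : SimpleGraph.pathGraph k →g HGraph k d where
  toFun := HInTop d
  map_rel' := by
    intro i j h
    cases d with
    | zero => exact h
    | succ d => exact h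

/-- The `i`-th subtree embeds as a graph homomorphism. -/
def HSubHom (d : ℕ) (i : Fin k) : HGraph k d →g HGraph k (d + 1) where
  toFun v := Sum.inr (i, v)
  map_rel' h := ⟨rfl, h⟩

lemma HRoot_eq_inTop (d : ℕ) : (HInTop d (0 : Fin k) : HVertex d k) = HRoot d k := by
  cases d <;> rfl

lemma exists_pathGraph_walk (i j : Fin k) :
    ∃ p : (SimpleGraph.pathGraph k).Walk i j, p.length ≤ k - 1 := by
  have hk : k ≠ 0 := NeZero.ne k
  obtain ⟨m, rfl⟩ := Nat.exists_eq_succ_of_ne_zero hk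
  obtain ⟨w⟩ := (SimpleGraph.pathGraph_connected m).preconnected i j
  refine ⟨w.toPath, ?_⟩
  have hlt := SimpleGraph.Walk.IsPath.length_lt w.toPath.2
  simp only [Fintype.card_fin] at hlt
  omega

lemma exists_walk_to_top :
    ∀ (d : ℕ) (u : HVertex d k),
      ∃ p : (HGraph k d).Walk u (HInTop d (HTop d u)), p.length ≤ d * k
  | 0, u => ⟨SimpleGraph.Walk.nil, Nat.zero_le _⟩
  | d + 1, Sum.inl i => ⟨SimpleGraph.Walk.nil, Nat.zero_le _⟩
  | d + 1, Sum.inr ⟨i, w⟩ => by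
    have hk : k ≠ 0 := NeZero.ne k
    obtain ⟨p, hp⟩ := exists_walk_to_top d w
    obtain ⟨q, hq⟩ := exists_pathGraph_walk (HTop d w) (0 : Fin k)
    let q' : (HGraph k d).Walk (HInTop d (HTop d w)) (HRoot d k) :=
      (q.map (HTopHom d)).copy rfl (HRoot_eq_inTop d)
    have hq' : q'.length ≤ k - 1 := by
      exact (SimpleGraph.Walk.length_copy _ _ _).trans_le ((SimpleGraph.Walk.length_map _ _).trans_le hq)
    have hadj : (HGraph k (d + 1)).Adj (Sum.inr (i, HRoot d k)) (Sum.inl i) :=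
      ⟨rfl, rfl⟩
    refine ⟨((p.append q').map (HSubHom d i)).concat hadj, ?_⟩
    have : ((p.append q').map (HSubHom d i)).length = p.length + q'.length := by
      simp [SimpleGraph.Walk.length_map, SimpleGraph.Walk.length_append]
    refine (SimpleGraph.Walk.length_concat _ _).trans_le ?_
    refine (congrArg (· + 1) this).trans_le ?_
    have hk1 : 1 ≤ k := Nat.one_le_iff_ne_zero.mpr hk
    have : (d + 1) * k = d * k + k := by ring
    omega

end HProofAux

/-- For all integers `d ≥ 1` and `k ≥ 2`, the diameter of `H_{d,k}`
(the maximum over pairs of vertices of the graph distance) is at most `(2d − 1)·k`. -/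
theorem hgraph_diameter_bound (d k : ℕ) (hd : 1 ≤ d) (hk : 2 ≤ k) [NeZero k] :
    (HGraph k (d - 1)).diam ≤ (2 * d - 1) * k := by
  set e := d - 1 with he
  have hde : 2 * d - 1 = 2 * e + 1 := by omega
  rw [hde]
  have hk1 : 1 ≤ k := by omega
  have key : ∀ u v : HVertex e k,
      (HGraph k e).edist u v ≤ ((2 * e + 1) * k : ℕ) := by
    intro u v
    obtain ⟨p, hp⟩ := exists_walk_to_top e u
    obtain ⟨q, hq⟩ := exists_pathGraph_walk (HTop e u) (HTop e v)
    obtain ⟨r, hr⟩ := exists_walk_to_top e v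
    let W : (HGraph k e).Walk u v :=
      (p.append (q.map (HTopHom e))).append r.reverse
    have hW : W.length ≤ (2 * e + 1) * k := by
      have : W.length = p.length + (q.map (HTopHom e)).length + r.reverse.length := by
        exact (SimpleGraph.Walk.length_append _ _).trans (congrArg (· + r.reverse.length) (SimpleGraph.Walk.length_append _ _))
      rw [this, SimpleGraph.Walk.length_map, SimpleGraph.Walk.length_reverse]
      have : (2 * e + 1) * k = e * k + k + e * k := by ring
      omega
    calc (HGraph k e).edist u v ≤ W.length := SimpleGraph.edist_le W
      _ ≤ ((2 * e + 1) * k : ℕ) := by exact_mod_cast hW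
  have hediam : (HGraph k e).ediam ≤ ((2 * e + 1) * k : ℕ) :=
    SimpleGraph.ediam_le_of_edist_le key
  have := ENat.toNat_le_toNat hediam (ENat.coe_ne_top _)
  rw [ENat.toNat_coe] at this
  exact this
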